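/- arXiv:1811.00076 — 2 statements merged into one kernel-verified Lean document; each statement's English description precedes it below -/
import Mathlib

section
/- Let H : [0,1] → ℝ be bounded, decreasing, and c, σ > 0. Define V_∞(c) = −2cσ² ln(∫₀^1 exp(−H(z)/(2cσ²)) dz). Then lim_{c→0⁺} V_∞(c) = H(1⁻), the left limit of H at 1. -/
open MeasureTheory Filter

/-- Let H : [0,1] → ℝ be bounded and decreasing, σ > 0, and let L = H(1⁻) be the
left limit of H at 1. With V_∞(c) = −2cσ² ln(∫₀¹ exp(−H(z)/(2cσ²)) dz), we have
V_∞(c) → H(1⁻) as c → 0⁺. -/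
theorem stmt8 (σ : ℝ) (hσ : 0 < σ) (H : ℝ → ℝ) (L : ℝ)
    (hanti : AntitoneOn H (Set.Icc 0 1))
    (hbd : ∃ M, ∀ z ∈ Set.Icc (0:ℝ) 1, |H z| ≤ M)
    (hL : Tendsto H (nhdsWithin 1 (Set.Iio 1)) (nhds L)) :
    Tendsto (fun c : ℝ =>
        -2 * c * σ ^ 2 * Real.log (∫ z in (0:ℝ)..1, Real.exp (-H z / (2 * c * σ ^ 2))))
      (nhdsWithin 0 (Set.Ioi 0)) (nhds L) := by
  have huIcc : Set.uIcc (0:ℝ) 1 = Set.Icc 0 1 := Set.uIcc_of_le zero_le_one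
  -- H z ≥ L on [0,1)
  have hge : ∀ z ∈ Set.Ico (0:ℝ) 1, L ≤ H z := by
    intro z hz
    refine le_of_tendsto hL ?_
    filter_upwards [Ioo_mem_nhdsLT_of_mem (show (1:ℝ) ∈ Set.Ioc z 1 from ⟨hz.2, le_refl 1⟩)]
      with w hw
    exact hanti ⟨hz.1, hz.2.le⟩ ⟨hz.1.trans hw.1.le, hw.2.le⟩ hw.1.le
  rw [Metric.tendsto_nhds]
  intro ε hε
  have hmem : {z | H z < L + ε/2} ∈ nhdsWithin 1 (Set.Iio 1) :=
    hL (Iio_mem_nhds (by linarith))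
  rw [mem_nhdsLT_iff_exists_Ico_subset] at hmem
  obtain ⟨l, hl, hsub⟩ := hmem
  set a : ℝ := max l 0 with ha
  have ha0 : 0 ≤ a := le_max_right _ _
  have ha1 : a < 1 := max_lt hl (by norm_num)
  set b : ℝ := (a + 1) / 2 with hbdef
  have hab : a < b := by rw [hbdef]; linarith
  have hb1 : b < 1 := by rw [hbdef]; linarith
  have hba : 0 < b - a := by linarith
  have hba1 : b - a < 1 := by linarith
  have hlogba : Real.log (b - a) < 0 := Real.log_neg hba hba1
  set K : ℝ := -Real.log (b - a) with hKdef
  have hK : 0 < K := by rw [hKdef]; linarith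
  -- key bounds for each c > 0
  have key : ∀ c : ℝ, 0 < c →
      L ≤ -2 * c * σ ^ 2 * Real.log (∫ z in (0:ℝ)..1, Real.exp (-H z / (2 * c * σ ^ 2))) ∧
      -2 * c * σ ^ 2 * Real.log (∫ z in (0:ℝ)..1, Real.exp (-H z / (2 * c * σ ^ 2)))
        ≤ L + ε/2 + 2 * c * σ ^ 2 * K := by
    intro c hc
    set β : ℝ := 2 * c * σ ^ 2 with hβdef
    have hβ : 0 < β := by positivity
    set f : ℝ → ℝ := fun z => Real.exp (-H z / β) with hf
    have hmono : MonotoneOn f (Set.uIcc 0 1) := by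
      rw [huIcc]
      intro x hx y hy hxy
      exact Real.exp_le_exp.2 ((div_le_div_iff_of_pos_right hβ).2 (neg_le_neg (hanti hx hy hxy)))
    have hint : IntervalIntegrable f volume 0 1 := hmono.intervalIntegrable
    have h0a : IntervalIntegrable f volume 0 a := hint.mono_set
      (by rw [huIcc, Set.uIcc_of_le ha0]; exact Set.Icc_subset_Icc le_rfl ha1.le)
    have hintab : IntervalIntegrable f volume a b := hint.mono_set
      (by rw [huIcc, Set.uIcc_of_le hab.le]; exact Set.Icc_subset_Icc ha0 hb1.le)
    have hb1int : IntervalIntegrable f volume b 1 := hint.mono_set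
      (by rw [huIcc, Set.uIcc_of_le hb1.le]; exact Set.Icc_subset_Icc (by linarith) le_rfl)
    have h0b : IntervalIntegrable f volume 0 b := hint.mono_set
      (by rw [huIcc, Set.uIcc_of_le (by linarith : (0:ℝ) ≤ b)]
          exact Set.Icc_subset_Icc le_rfl hb1.le)
    set I : ℝ := ∫ z in (0:ℝ)..1, f z with hI
    -- upper bound on I
    have hIle : I ≤ Real.exp (-L / β) := by
      have hae : f ≤ᵐ[volume.restrict (Set.Icc (0:ℝ) 1)] fun _ => Real.exp (-L / β) := by
        have hne : ∀ᵐ z ∂(volume.restrict (Set.Icc (0:ℝ) 1)), z ≠ 1 := by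
          refine ae_restrict_of_ae ?_
          have hset : {z : ℝ | ¬ z ≠ 1} = {1} := by ext z; simp
          rw [ae_iff, hset]
          exact measure_singleton 1
        filter_upwards [hne, ae_restrict_mem measurableSet_Icc] with z hz1 hz2
        have hzIco : z ∈ Set.Ico (0:ℝ) 1 := ⟨hz2.1, lt_of_le_of_ne hz2.2 hz1⟩
        exact Real.exp_le_exp.2 ((div_le_div_iff_of_pos_right hβ).2 (neg_le_neg (hge z hzIco)))
      have := intervalIntegral.integral_mono_ae_restrict zero_le_one hint
        intervalIntegrable_const hae
      simpa using this
    -- lower bound on I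
    have hptw : ∀ z ∈ Set.Icc a b, Real.exp (-(L + ε/2) / β) ≤ f z := by
      intro z hz
      have hzH : H z < L + ε/2 := hsub ⟨le_trans (le_max_left l 0) hz.1, lt_of_le_of_lt hz.2 hb1⟩
      exact Real.exp_le_exp.2 ((div_le_div_iff_of_pos_right hβ).2 (by linarith))
    have hmid : (b - a) * Real.exp (-(L + ε/2) / β) ≤ ∫ z in a..b, f z := by
      have h := intervalIntegral.integral_mono_on (f := fun _ => Real.exp (-(L + ε/2) / β))
        hab.le intervalIntegrable_const hintab hptw
      simpa [smul_eq_mul] using h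
    have hIge : (b - a) * Real.exp (-(L + ε/2) / β) ≤ I := by
      have e1 : (∫ z in (0:ℝ)..a, f z) + (∫ z in a..b, f z) = ∫ z in (0:ℝ)..b, f z :=
        intervalIntegral.integral_add_adjacent_intervals h0a hintab
      have e2 : (∫ z in (0:ℝ)..b, f z) + (∫ z in b..1, f z) = I :=
        intervalIntegral.integral_add_adjacent_intervals h0b hb1int
      have n1 : 0 ≤ ∫ z in (0:ℝ)..a, f z :=
        intervalIntegral.integral_nonneg ha0 (fun u _ => (Real.exp_pos _).le)
      have n2 : 0 ≤ ∫ z in b..1, f z :=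
        intervalIntegral.integral_nonneg hb1.le (fun u _ => (Real.exp_pos _).le)
      linarith
    have hIpos : 0 < I := lt_of_lt_of_le (by positivity) hIge
    have hlog1 : Real.log I ≤ -L / β := by
      have := Real.log_le_log hIpos hIle
      rwa [Real.log_exp] at this
    have hlog2 : Real.log (b - a) + (-(L + ε/2) / β) ≤ Real.log I := by
      have := Real.log_le_log (by positivity) hIge
      rwa [Real.log_mul (ne_of_gt hba) (Real.exp_ne_zero _), Real.log_exp] at this
    constructor
    · have h1 := mul_le_mul_of_nonneg_left hlog1 hβ.le
      have h2 : β * (-L / β) = -L := by field_simp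
      have : -2 * c * σ ^ 2 * Real.log I = -(β * Real.log I) := by rw [hβdef]; ring
      rw [this]; linarith
    · have h1 := mul_le_mul_of_nonneg_left hlog2 hβ.le
      have h2 : β * (-(L + ε/2) / β) = -(L + ε/2) := by field_simp
      have h3 : -2 * c * σ ^ 2 * Real.log I = -(β * Real.log I) := by rw [hβdef]; ring
      have h4 : 2 * c * σ ^ 2 * K = β * K := by rw [hβdef]
      rw [h3, h4, hKdef]
      nlinarith [mul_le_mul_of_nonneg_left hlog2 hβ.le]
  -- conclude
  have hmem2 : Set.Ioo (0:ℝ) (ε / (4 * σ ^ 2 * K)) ∈ nhdsWithin 0 (Set.Ioi 0) :=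
    Ioo_mem_nhdsGT_of_mem ⟨le_refl 0, by positivity⟩
  filter_upwards [hmem2] with c hc
  obtain ⟨hlow, hhigh⟩ := key c hc.1
  have hcK : c * (4 * σ ^ 2 * K) < ε := (lt_div_iff₀ (by positivity)).1 hc.2
  rw [Real.dist_eq, abs_of_nonneg (by linarith)]
  nlinarith
end

section
/- Let R : ℝ₊ × [0,1] → ℝ be such that the divided difference h(t,x,y) = (R(t,x) − R(t,y))/(x − y) (extended by ∂_x R(t,x) on the diagonal) is well-defined, non-positive, and increasing in each of t, x, y on [t₀,T] × [0,1]². Let μ, μ′ be probability measures whose c.d.f.s F_μ, F_{μ′} are absolutely continuous on [t₀,T] with F_μ(t₀) = F_{μ′}(t₀), and suppose t ↦ R(t,F_μ(t)) and t ↦ h(t, F_μ(t), F_{μ′}(t)) are absolutely continuous on [t₀,T]. Then ∫_{t₀}^T (R(t,F_μ(t)) − R(t,F_{μ′}(t))) d(μ − μ′)(t) ≤ 0. -/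
open MeasureTheory Set

open MeasureTheory Set Filter
open scoped ENNReal

section LLhelpers

lemma LL_splitIoc {φ : ℝ → ℝ} {a c b : ℝ} (hac : a ≤ c) (hcb : c ≤ b)
    (hφ : IntegrableOn φ (Ioc a b)) :
    ∫ s in Ioc a b, φ s = (∫ s in Ioc a c, φ s) + ∫ s in Ioc c b, φ s := by
  rw [← Ioc_union_Ioc_eq_Ioc hac hcb]
  exact setIntegral_union (Ioc_disjoint_Ioc_of_le le_rfl) measurableSet_Ioc
    (hφ.mono_set (Ioc_subset_Ioc_right hcb)) (hφ.mono_set (Ioc_subset_Ioc_left hac))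

lemma LL_intmul {a b : ℝ} {φ ψ : ℝ → ℝ} (hφ : IntegrableOn φ (Ioc a b))
    (hψ : ContinuousOn ψ (Icc a b)) :
    IntegrableOn (fun t => φ t * ψ t) (Ioc a b) := by
  obtain ⟨C, hC⟩ := IsCompact.exists_bound_of_continuousOn isCompact_Icc hψ
  have hb : ∀ᵐ t ∂(volume.restrict (Ioc a b)), ‖ψ t‖ ≤ C :=
    (ae_restrict_mem measurableSet_Ioc).mono fun t ht => hC t (Ioc_subset_Icc_self ht)
  have hm : AEStronglyMeasurable ψ ((volume : Measure ℝ).restrict (Ioc a b)) :=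
    (hψ.mono Ioc_subset_Icc_self).aestronglyMeasurable measurableSet_Ioc
  exact (hφ.bdd_mul hm hb).congr (Eventually.of_forall fun x => mul_comm _ _)

lemma LL_keyB' {a b : ℝ} (φ ψ : ℝ → ℝ)
    (hφm : StronglyMeasurable φ) (hψm : StronglyMeasurable ψ)
    (hφ : IntegrableOn φ (Ioc a b)) (hψ : IntegrableOn ψ (Ioc a b)) :
    ∫ t in Ioc a b, ψ t * ((∫ s in Ioc a b, φ s) - ∫ s in Ioc a t, φ s)
      = ∫ t in Ioc a b, φ t * ∫ s in Ioc a t, ψ s := by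
  set ρ := (volume : Measure ℝ).restrict (Ioc a b) with hρ
  set F : ℝ → ℝ → ℝ := fun t s => if t < s then ψ t * φ s else 0 with hF
  have hFm : StronglyMeasurable (Function.uncurry F) := by
    have : Function.uncurry F
        = ({p : ℝ × ℝ | p.1 < p.2}).indicator (fun p => ψ p.1 * φ p.2) := by
      ext p
      simp only [Function.uncurry, hF, Set.indicator, mem_setOf_eq]
    rw [this]
    exact ((hψm.measurable.comp measurable_fst).mul
      (hφm.measurable.comp measurable_snd)).indicator
      (isOpen_lt continuous_fst continuous_snd).measurableSet |>.stronglyMeasurable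
  have hFi : Integrable (Function.uncurry F) (ρ.prod ρ) := by
    refine Integrable.mono' (hψ.norm.mul_prod hφ.norm) hFm.aestronglyMeasurable ?_
    refine Filter.Eventually.of_forall fun p => ?_
    show ‖F p.1 p.2‖ ≤ ‖ψ p.1‖ * ‖φ p.2‖
    by_cases hp : p.1 < p.2
    · simp [hF, hp, norm_mul, le_refl]
    · simp [hF, hp, mul_nonneg, norm_nonneg]
  have swap := integral_integral_swap hFi
  have lhs : ∫ t in Ioc a b, ψ t * ((∫ s in Ioc a b, φ s) - ∫ s in Ioc a t, φ s)
      = ∫ t, (∫ s, F t s ∂ρ) ∂ρ := by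
    refine setIntegral_congr_fun measurableSet_Ioc fun t ht => ?_
    have h1 : ∫ s, F t s ∂ρ = ∫ s in Ioc a b, (Ioi t).indicator (fun s => ψ t * φ s) s := by
      refine setIntegral_congr_fun measurableSet_Ioc fun s _ => ?_
      by_cases hs : t < s <;> simp [hF, Set.indicator, hs, mem_Ioi]
    have h2 : Ioc a b ∩ Ioi t = Ioc t b := by
      ext s
      simp only [mem_inter_iff, mem_Ioc, mem_Ioi]
      constructor
      · rintro ⟨⟨_, h2⟩, h3⟩; exact ⟨h3, h2⟩
      · rintro ⟨h1', h2⟩; exact ⟨⟨ht.1.trans h1', h2⟩, h1'⟩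
    have h3 : ∫ s in Ioc t b, φ s = (∫ s in Ioc a b, φ s) - ∫ s in Ioc a t, φ s := by
      rw [LL_splitIoc ht.1.le ht.2 hφ]; ring
    rw [h1, setIntegral_indicator measurableSet_Ioi, h2, integral_const_mul, h3]
  have rhs : ∫ s, (∫ t, F t s ∂ρ) ∂ρ = ∫ s in Ioc a b, φ s * ∫ t in Ioc a s, ψ t := by
    refine setIntegral_congr_fun measurableSet_Ioc fun s hs => ?_
    have h1 : ∫ t, F t s ∂ρ = ∫ t in Ioc a b, (Iio s).indicator (fun t => ψ t * φ s) t := by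
      refine setIntegral_congr_fun measurableSet_Ioc fun t _ => ?_
      by_cases hts : t < s <;> simp [hF, Set.indicator, hts, mem_Iio]
    have h2 : Ioc a b ∩ Iio s = Ioo a s := by
      ext t
      simp only [mem_inter_iff, mem_Ioc, mem_Ioo, mem_Iio]
      constructor
      · rintro ⟨⟨h1', _⟩, h3⟩; exact ⟨h1', h3⟩
      · rintro ⟨h1', h2'⟩; exact ⟨⟨h1', (h2'.le.trans hs.2)⟩, h2'⟩
    have h3 : ∫ t in Ioo a s, ψ t * φ s = ∫ t in Ioc a s, ψ t * φ s :=
      setIntegral_congr_set Ioo_ae_eq_Ioc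
    rw [h1, setIntegral_indicator measurableSet_Iio, h2, h3, integral_mul_const, mul_comm]
  exact lhs.trans (swap.trans rhs)

lemma LL_keyB {a b : ℝ} (φ ψ : ℝ → ℝ)
    (hφ : IntegrableOn φ (Ioc a b)) (hψ : IntegrableOn ψ (Ioc a b)) :
    ∫ t in Ioc a b, ψ t * ((∫ s in Ioc a b, φ s) - ∫ s in Ioc a t, φ s)
      = ∫ t in Ioc a b, φ t * ∫ s in Ioc a t, ψ s := by
  obtain ⟨φ', hφ'm, hφ'⟩ :
      ∃ g, StronglyMeasurable g ∧ φ =ᵐ[(volume : Measure ℝ).restrict (Ioc a b)] g :=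
    ⟨hφ.aestronglyMeasurable.mk φ, hφ.aestronglyMeasurable.stronglyMeasurable_mk,
      hφ.aestronglyMeasurable.ae_eq_mk⟩
  obtain ⟨ψ', hψ'm, hψ'⟩ :
      ∃ g, StronglyMeasurable g ∧ ψ =ᵐ[(volume : Measure ℝ).restrict (Ioc a b)] g :=
    ⟨hψ.aestronglyMeasurable.mk ψ, hψ.aestronglyMeasurable.stronglyMeasurable_mk,
      hψ.aestronglyMeasurable.ae_eq_mk⟩
  have hsub : ∀ t ∈ Ioc a b, ∀ (u u' : ℝ → ℝ),
      u =ᵐ[(volume : Measure ℝ).restrict (Ioc a b)] u' →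
      (∫ s in Ioc a t, u s) = ∫ s in Ioc a t, u' s := fun t ht u u' hu =>
    integral_congr_ae (ae_restrict_of_ae_restrict_of_subset (Ioc_subset_Ioc_right ht.2) hu)
  have e1 : ∫ t in Ioc a b, ψ t * ((∫ s in Ioc a b, φ s) - ∫ s in Ioc a t, φ s)
      = ∫ t in Ioc a b, ψ' t * ((∫ s in Ioc a b, φ' s) - ∫ s in Ioc a t, φ' s) := by
    refine integral_congr_ae ?_
    filter_upwards [hψ', ae_restrict_mem measurableSet_Ioc] with t h1 h2
    rw [h1, integral_congr_ae hφ', hsub t h2 _ _ hφ']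
  have e2 : ∫ t in Ioc a b, φ t * ∫ s in Ioc a t, ψ s
      = ∫ t in Ioc a b, φ' t * ∫ s in Ioc a t, ψ' s := by
    refine integral_congr_ae ?_
    filter_upwards [hφ', ae_restrict_mem measurableSet_Ioc] with t h1 h2
    rw [h1, hsub t h2 _ _ hψ']
  rw [e1, e2]
  exact LL_keyB' φ' ψ' hφ'm hψ'm (hφ.congr_fun_ae hφ') (hψ.congr_fun_ae hψ')

lemma LL_sq {a b : ℝ} (φ : ℝ → ℝ) (hφ : IntegrableOn φ (Ioc a b)) :
    (∫ s in Ioc a b, φ s * ∫ u in Ioc a s, φ u) = (∫ s in Ioc a b, φ s)^2 / 2 := by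
  have hkey := LL_keyB φ φ hφ hφ
  set C := ∫ s in Ioc a b, φ s with hC
  have hPf : IntegrableOn (fun s => φ s * ∫ u in Ioc a s, φ u) (Ioc a b) := by
    refine LL_intmul hφ ?_
    exact intervalIntegral.continuousOn_primitive ((integrableOn_Icc_iff_integrableOn_Ioc (ha := enorm_ne_top)).2 hφ)
  have hconst : IntegrableOn (fun s => φ s * C) (Ioc a b) := hφ.mul_const C
  have expand : ∫ t in Ioc a b, φ t * (C - ∫ s in Ioc a t, φ s)
      = C * C - ∫ t in Ioc a b, φ t * ∫ s in Ioc a t, φ s := by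
    have : (fun t => φ t * (C - ∫ s in Ioc a t, φ s))
        = fun t => φ t * C - φ t * ∫ s in Ioc a t, φ s := by
      ext t; ring
    rw [this, integral_sub hconst hPf, integral_mul_const, ← hC]
  rw [expand] at hkey
  linarith [hkey]

lemma LL_keyA' {a b : ℝ} (ν : Measure ℝ) [IsFiniteMeasure ν] (φ : ℝ → ℝ)
    (hφm : StronglyMeasurable φ) (hφ : IntegrableOn φ (Ioc a b)) :
    ∫ t in Icc a b, (∫ s in Ioc a t, φ s) ∂ν
      = ∫ s in Ioc a b, φ s * (ν (Icc s b)).toReal := by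
  set ρ := (volume : Measure ℝ).restrict (Ioc a b) with hρ
  set κ := ν.restrict (Icc a b) with hκ
  set F : ℝ → ℝ → ℝ := fun t s => if s ≤ t then φ s else 0 with hF
  have hFm : StronglyMeasurable (Function.uncurry F) := by
    have : Function.uncurry F
        = ({p : ℝ × ℝ | p.2 ≤ p.1}).indicator (fun p => φ p.2) := by
      ext p
      simp only [Function.uncurry, hF, Set.indicator, mem_setOf_eq]
    rw [this]
    exact ((hφm.measurable.comp measurable_snd)).indicator
      (isClosed_le continuous_snd continuous_fst).measurableSet |>.stronglyMeasurable
  have hone : Integrable (fun _ : ℝ => (1:ℝ)) κ := integrable_const 1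
  have hFi : Integrable (Function.uncurry F) (κ.prod ρ) := by
    refine Integrable.mono' (hone.mul_prod hφ.norm) hFm.aestronglyMeasurable ?_
    refine Filter.Eventually.of_forall fun p => ?_
    show ‖F p.1 p.2‖ ≤ 1 * ‖φ p.2‖
    by_cases hp : p.2 ≤ p.1
    · simp [hF, hp, le_refl]
    · simp [hF, hp, norm_nonneg]
  have swap := integral_integral_swap hFi
  have lhs : ∫ t in Icc a b, (∫ s in Ioc a t, φ s) ∂ν
      = ∫ t, (∫ s, F t s ∂ρ) ∂κ := by
    refine setIntegral_congr_fun measurableSet_Icc fun t ht => ?_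
    have h1 : ∫ s, F t s ∂ρ = ∫ s in Ioc a b, (Iic t).indicator (fun s => φ s) s := by
      refine setIntegral_congr_fun measurableSet_Ioc fun s _ => ?_
      by_cases hs : s ≤ t <;> simp [hF, Set.indicator, hs, mem_Iic]
    have h2 : Ioc a b ∩ Iic t = Ioc a t := by
      ext s
      simp only [mem_inter_iff, mem_Ioc, mem_Iic]
      constructor
      · rintro ⟨⟨h1', _⟩, h3⟩; exact ⟨h1', h3⟩
      · rintro ⟨h1', h2'⟩; exact ⟨⟨h1', h2'.trans ht.2⟩, h2'⟩
    rw [h1, setIntegral_indicator measurableSet_Iic, h2]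
  have rhs : ∫ s, (∫ t, F t s ∂κ) ∂ρ = ∫ s in Ioc a b, φ s * (ν (Icc s b)).toReal := by
    refine setIntegral_congr_fun measurableSet_Ioc fun s hs => ?_
    have h1 : ∫ t, F t s ∂κ = ∫ t, (Ici s).indicator (fun _ => φ s) t ∂κ := by
      refine integral_congr_ae (Filter.Eventually.of_forall fun t => ?_)
      by_cases hts : s ≤ t <;> simp [hF, Set.indicator, hts, mem_Ici]
    have h2 : κ (Ici s) = ν (Icc s b) := by
      rw [hκ, Measure.restrict_apply measurableSet_Ici]
      congr 1
      ext t
      simp only [mem_inter_iff, mem_Ici, mem_Icc]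
      constructor
      · rintro ⟨h1', ⟨_, h3⟩⟩; exact ⟨h1', h3⟩
      · rintro ⟨h1', h2'⟩; exact ⟨h1', ⟨hs.1.le.trans h1', h2'⟩⟩
    rw [h1, integral_indicator_const _ measurableSet_Ici, Measure.real, h2, smul_eq_mul, mul_comm]
  exact lhs.trans (swap.trans rhs)

lemma LL_keyA {a b : ℝ} (ν : Measure ℝ) [IsFiniteMeasure ν] (φ : ℝ → ℝ)
    (hφ : IntegrableOn φ (Ioc a b)) :
    ∫ t in Icc a b, (∫ s in Ioc a t, φ s) ∂ν
      = ∫ s in Ioc a b, φ s * (ν (Icc s b)).toReal := by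
  obtain ⟨φ', hφ'm, hφ'⟩ :
      ∃ g, StronglyMeasurable g ∧ φ =ᵐ[(volume : Measure ℝ).restrict (Ioc a b)] g :=
    ⟨hφ.aestronglyMeasurable.mk φ, hφ.aestronglyMeasurable.stronglyMeasurable_mk,
      hφ.aestronglyMeasurable.ae_eq_mk⟩
  have e1 : ∫ t in Icc a b, (∫ s in Ioc a t, φ s) ∂ν
      = ∫ t in Icc a b, (∫ s in Ioc a t, φ' s) ∂ν := by
    refine setIntegral_congr_fun measurableSet_Icc fun t ht => ?_
    exact integral_congr_ae
      (ae_restrict_of_ae_restrict_of_subset (Ioc_subset_Ioc_right ht.2) hφ')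
  have e2 : ∫ s in Ioc a b, φ s * (ν (Icc s b)).toReal
      = ∫ s in Ioc a b, φ' s * (ν (Icc s b)).toReal := by
    refine integral_congr_ae ?_
    filter_upwards [hφ'] with s h1
    rw [h1]
  rw [e1, e2]
  exact LL_keyA' ν φ' hφ'm (hφ.congr_fun_ae hφ')

lemma LL_density_nonneg {a b : ℝ} (g : ℝ → ℝ) (hg : IntegrableOn g (Ioc a b))
    (hmono : ∀ x ∈ Icc a b, ∀ y ∈ Icc a b, x ≤ y →
      (∫ s in Ioc a x, g s) ≤ ∫ s in Ioc a y, g s) :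
    0 ≤ᵐ[(volume : Measure ℝ).restrict (Ioc a b)] g := by
  obtain ⟨m, hmm, hm⟩ :
      ∃ m, StronglyMeasurable m ∧ g =ᵐ[(volume : Measure ℝ).restrict (Ioc a b)] m :=
    ⟨hg.aestronglyMeasurable.mk g, hg.aestronglyMeasurable.stronglyMeasurable_mk,
      hg.aestronglyMeasurable.ae_eq_mk⟩
  have hmi : IntegrableOn m (Ioc a b) := hg.congr_fun_ae hm
  set G : ℝ → ℝ := (Ioc a b).indicator m with hG
  have hloc : LocallyIntegrable G volume :=
    (hmi.integrable_indicator measurableSet_Ioc).locallyIntegrable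
  set v := IsUnifLocDoublingMeasure.vitaliFamily (volume : Measure ℝ) 1 with hv
  have hLeb := v.ae_tendsto_average hloc
  have claim : ∀ᵐ x ∂(volume : Measure ℝ), x ∈ Ioo a b → 0 ≤ G x := by
    filter_upwards [hLeb] with x hx hxmem
    have htend : Tendsto (fun y => ⨍ t in Icc x y, G t) (nhdsWithin x (Ioi x)) (nhds (G x)) :=
      hx.comp (Real.tendsto_Icc_vitaliFamily_right x)
    refine ge_of_tendsto htend ?_
    have hmem : Ioc x b ∈ nhdsWithin x (Ioi x) :=
      Ioc_mem_nhdsGT_of_mem ⟨le_refl x, hxmem.2⟩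
    filter_upwards [hmem] with y hy
    have hsub : Icc x y ⊆ Ioc a b := fun t ht =>
      ⟨hxmem.1.trans_le ht.1, ht.2.trans hy.2⟩
    have e1 : ∫ t in Icc x y, G t = ∫ t in Icc x y, m t := by
      refine setIntegral_congr_fun measurableSet_Icc fun t ht => ?_
      exact indicator_of_mem (hsub ht) m
    have e2 : ∫ t in Icc x y, m t = ∫ t in Icc x y, g t := by
      refine integral_congr_ae ?_
      exact ae_restrict_of_ae_restrict_of_subset hsub hm.symm
    have e3 : ∫ t in Icc x y, g t = ∫ t in Ioc x y, g t :=
      (setIntegral_congr_set Ioc_ae_eq_Icc).symm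
    have e4 : (0:ℝ) ≤ ∫ t in Ioc x y, g t := by
      have hx' : x ∈ Icc a b := ⟨hxmem.1.le, hxmem.2.le⟩
      have hy' : y ∈ Icc a b := ⟨(hxmem.1.trans hy.1).le, hy.2⟩
      have := hmono x hx' y hy' hy.1.le
      have hsplit := LL_splitIoc hx'.1 hy.1.le (hg.mono_set (Ioc_subset_Ioc_right hy'.2))
      linarith [hsplit]
    have : (0:ℝ) ≤ ∫ t in Icc x y, G t := by rw [e1, e2, e3]; exact e4
    rw [setAverage_eq]
    exact smul_nonneg (by positivity) this
  have h1 : ∀ᵐ x ∂(volume : Measure ℝ).restrict (Ioo a b), 0 ≤ G x := by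
    filter_upwards [ae_restrict_of_ae claim, ae_restrict_mem measurableSet_Ioo] with x h1 h2
    exact h1 h2
  have h2 : ∀ᵐ x ∂(volume : Measure ℝ).restrict (Ioc a b), 0 ≤ G x := by
    rwa [Measure.restrict_congr_set Ioo_ae_eq_Ioc] at h1
  filter_upwards [h2, ae_restrict_mem measurableSet_Ioc, hm] with x hx1 hx2 hx3
  rw [hx3]
  rwa [hG, indicator_of_mem hx2] at hx1

lemma LL_probIcc (ν : Measure ℝ) [IsProbabilityMeasure ν] {s T : ℝ} (hsT : s ≤ T)
    (hν : ν (Ici s) = ν (Ioi s)) :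
    (ν (Icc s T)).toReal = (ν (Iic T)).toReal - (ν (Iic s)).toReal := by
  have h1 : Icc s T = Ici s \ Ioi T := by
    ext x
    simp only [mem_Icc, mem_diff, mem_Ici, mem_Ioi, not_lt]
  have hsubset : Ioi T ⊆ Ici s := fun x hx => hsT.trans hx.le
  have h2 : ν (Icc s T) = ν (Ici s) - ν (Ioi T) := by
    rw [h1]
    exact measure_diff hsubset measurableSet_Ioi.nullMeasurableSet (measure_ne_top ν _)
  have h3 : ∀ x : ℝ, (ν (Ioi x)).toReal = 1 - (ν (Iic x)).toReal := by
    intro x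
    have : ν (Ioi x) = ν univ - ν (Iic x) := by
      rw [← Set.compl_Iic]
      exact measure_compl measurableSet_Iic (measure_ne_top ν _)
    rw [this, ENNReal.toReal_sub_of_le (measure_mono (subset_univ _)) (measure_ne_top ν _)]
    simp
  have h4 : (ν (Icc s T)).toReal = (ν (Ici s)).toReal - (ν (Ioi T)).toReal := by
    rw [h2, ENNReal.toReal_sub_of_le (measure_mono hsubset) (measure_ne_top ν _)]
  rw [h4, hν, h3, h3]
  ring

end LLhelpers


/-- Lasry–Lions-type monotonicity. If the divided difference
h(t,x,y) = (R(t,x) − R(t,y))/(x − y) (extended by ∂ₓR(t,x) on the diagonal) is non-positive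
and increasing in each of t, x, y, and μ, μ′ are probability measures whose c.d.f.s are
absolutely continuous on [t₀,T] (expressed via integrable densities) with Fμ(t₀) = Fμ′(t₀),
and t ↦ R(t,Fμ(t)), t ↦ R(t,Fμ′(t)), t ↦ h(t,Fμ(t),Fμ′(t)) are absolutely continuous on
[t₀,T], then ∫_{t₀}^T (R(t,Fμ(t)) − R(t,Fμ′(t))) d(μ − μ′)(t) ≤ 0. -/
theorem stmt14 (t₀ T : ℝ) (hT : t₀ ≤ T)
    (R : ℝ → ℝ → ℝ) (h : ℝ → ℝ → ℝ → ℝ)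
    (hdiv : ∀ t ∈ Icc t₀ T, ∀ x ∈ Icc (0:ℝ) 1, ∀ y ∈ Icc (0:ℝ) 1, x ≠ y →
      h t x y = (R t x - R t y) / (x - y))
    (hdiag : ∀ t ∈ Icc t₀ T, ∀ x ∈ Icc (0:ℝ) 1, HasDerivAt (fun x' => R t x') (h t x x) x)
    (hneg : ∀ t ∈ Icc t₀ T, ∀ x ∈ Icc (0:ℝ) 1, ∀ y ∈ Icc (0:ℝ) 1, h t x y ≤ 0)
    (hmono_t : ∀ x ∈ Icc (0:ℝ) 1, ∀ y ∈ Icc (0:ℝ) 1,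
      MonotoneOn (fun t => h t x y) (Icc t₀ T))
    (hmono_x : ∀ t ∈ Icc t₀ T, ∀ y ∈ Icc (0:ℝ) 1,
      MonotoneOn (fun x => h t x y) (Icc (0:ℝ) 1))
    (hmono_y : ∀ t ∈ Icc t₀ T, ∀ x ∈ Icc (0:ℝ) 1,
      MonotoneOn (fun y => h t x y) (Icc (0:ℝ) 1))
    (μ μ' : Measure ℝ) [IsProbabilityMeasure μ] [IsProbabilityMeasure μ']
    (Fμ Fμ' fμ fμ' : ℝ → ℝ)
    (hFμdef : ∀ t, Fμ t = (μ (Iic t)).toReal)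
    (hFμ'def : ∀ t, Fμ' t = (μ' (Iic t)).toReal)
    (hfμ : IntervalIntegrable fμ volume t₀ T)
    (hfμ' : IntervalIntegrable fμ' volume t₀ T)
    (hACμ : ∀ t ∈ Icc t₀ T, Fμ t = Fμ t₀ + ∫ s in t₀..t, fμ s)
    (hACμ' : ∀ t ∈ Icc t₀ T, Fμ' t = Fμ' t₀ + ∫ s in t₀..t, fμ' s)
    (h0 : Fμ t₀ = Fμ' t₀)
    (gR gR' gh : ℝ → ℝ)
    (hgR : IntervalIntegrable gR volume t₀ T)
    (hgR' : IntervalIntegrable gR' volume t₀ T)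
    (hgh : IntervalIntegrable gh volume t₀ T)
    (hRAC : ∀ t ∈ Icc t₀ T, R t (Fμ t) = R t₀ (Fμ t₀) + ∫ s in t₀..t, gR s)
    (hRAC' : ∀ t ∈ Icc t₀ T, R t (Fμ' t) = R t₀ (Fμ' t₀) + ∫ s in t₀..t, gR' s)
    (hhAC : ∀ t ∈ Icc t₀ T,
      h t (Fμ t) (Fμ' t) = h t₀ (Fμ t₀) (Fμ' t₀) + ∫ s in t₀..t, gh s) :
    (∫ t in Icc t₀ T, (R t (Fμ t) - R t (Fμ' t)) ∂μ)
      - (∫ t in Icc t₀ T, (R t (Fμ t) - R t (Fμ' t)) ∂μ') ≤ 0 := by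
  have t₀mem : t₀ ∈ Icc t₀ T := ⟨le_rfl, hT⟩
  have Tmem : T ∈ Icc t₀ T := ⟨hT, le_rfl⟩
  -- densities
  set d : ℝ → ℝ := fun s => gR s - gR' s with hd_def
  set f : ℝ → ℝ := fun s => fμ s - fμ' s with hf_def
  have hgRi : IntegrableOn gR (Ioc t₀ T) :=
    (intervalIntegrable_iff_integrableOn_Ioc_of_le hT).1 hgR
  have hgR'i : IntegrableOn gR' (Ioc t₀ T) :=
    (intervalIntegrable_iff_integrableOn_Ioc_of_le hT).1 hgR'
  have hghi : IntegrableOn gh (Ioc t₀ T) :=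
    (intervalIntegrable_iff_integrableOn_Ioc_of_le hT).1 hgh
  have hfμi : IntegrableOn fμ (Ioc t₀ T) :=
    (intervalIntegrable_iff_integrableOn_Ioc_of_le hT).1 hfμ
  have hfμ'i : IntegrableOn fμ' (Ioc t₀ T) :=
    (intervalIntegrable_iff_integrableOn_Ioc_of_le hT).1 hfμ'
  have hd : IntegrableOn d (Ioc t₀ T) := hgRi.sub hgR'i
  have hf : IntegrableOn f (Ioc t₀ T) := hfμi.sub hfμ'i
  -- cdf values in [0,1]
  have hrange : ∀ (ν : Measure ℝ) (_ : IsProbabilityMeasure ν) (t : ℝ),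
      (ν (Iic t)).toReal ∈ Icc (0:ℝ) 1 := by
    intro ν hν t
    constructor
    · exact ENNReal.toReal_nonneg
    · have h1 : ν (Iic t) ≤ 1 := prob_le_one
      calc (ν (Iic t)).toReal ≤ (1 : ℝ≥0∞).toReal :=
            ENNReal.toReal_mono (by norm_num) h1
        _ = 1 := by simp
  have hFμr : ∀ t, Fμ t ∈ Icc (0:ℝ) 1 := fun t => by
    rw [hFμdef]; exact hrange μ inferInstance t
  have hFμ'r : ∀ t, Fμ' t ∈ Icc (0:ℝ) 1 := fun t => by
    rw [hFμ'def]; exact hrange μ' inferInstance t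
  have hFμmono : Monotone Fμ := by
    intro x y hxy
    rw [hFμdef, hFμdef]
    exact ENNReal.toReal_mono (measure_ne_top μ _) (measure_mono (Iic_subset_Iic.2 hxy))
  have hFμ'mono : Monotone Fμ' := by
    intro x y hxy
    rw [hFμ'def, hFμ'def]
    exact ENNReal.toReal_mono (measure_ne_top μ' _) (measure_mono (Iic_subset_Iic.2 hxy))
  -- primitive representations
  have hIIsub : ∀ (g : ℝ → ℝ), IntegrableOn g (Ioc t₀ T) → ∀ t ∈ Icc t₀ T,
      IntervalIntegrable g volume t₀ t := fun g hg t ht =>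
    (intervalIntegrable_iff_integrableOn_Ioc_of_le ht.1).2
      (hg.mono_set (Ioc_subset_Ioc_right ht.2))
  have hDeq : ∀ t ∈ Icc t₀ T, R t (Fμ t) - R t (Fμ' t) = ∫ s in Ioc t₀ t, d s := by
    intro t ht
    have h1 := hRAC t ht
    have h2 := hRAC' t ht
    have h3 : R t (Fμ t) - R t (Fμ' t) = (∫ s in t₀..t, gR s) - ∫ s in t₀..t, gR' s := by
      rw [h1, h2, h0]; ring
    rw [h3, ← intervalIntegral.integral_sub (hIIsub gR hgRi t ht) (hIIsub gR' hgR'i t ht),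
      intervalIntegral.integral_of_le ht.1]
  have hGeq : ∀ t ∈ Icc t₀ T, Fμ t - Fμ' t = ∫ s in Ioc t₀ t, f s := by
    intro t ht
    have h1 := hACμ t ht
    have h2 := hACμ' t ht
    have h3 : Fμ t - Fμ' t = (∫ s in t₀..t, fμ s) - ∫ s in t₀..t, fμ' s := by
      rw [h1, h2, h0]; ring
    rw [h3, ← intervalIntegral.integral_sub (hIIsub fμ hfμi t ht) (hIIsub fμ' hfμ'i t ht),
      intervalIntegral.integral_of_le ht.1]
  set c₀ : ℝ := h t₀ (Fμ t₀) (Fμ' t₀) with hc₀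
  have hHeq : ∀ t ∈ Icc t₀ T, h t (Fμ t) (Fμ' t) = c₀ + ∫ s in Ioc t₀ t, gh s := by
    intro t ht
    rw [hhAC t ht, intervalIntegral.integral_of_le ht.1]
  -- divided difference identity
  have hDGH : ∀ t ∈ Icc t₀ T,
      R t (Fμ t) - R t (Fμ' t) = (Fμ t - Fμ' t) * h t (Fμ t) (Fμ' t) := by
    intro t ht
    by_cases heq : Fμ t = Fμ' t
    · rw [heq]; ring
    · rw [hdiv t ht _ (hFμr t) _ (hFμ'r t) heq]
      have hne : Fμ t - Fμ' t ≠ 0 := sub_ne_zero.2 heq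
      field_simp
  -- Step A : rewrite the μ- and μ'- integrals via Fubini
  have e1 : (∫ t in Icc t₀ T, (R t (Fμ t) - R t (Fμ' t)) ∂μ)
      = ∫ s in Ioc t₀ T, d s * (μ (Icc s T)).toReal := by
    rw [setIntegral_congr_fun measurableSet_Icc
      (fun t ht => hDeq t ht : EqOn _ (fun t => ∫ s in Ioc t₀ t, d s) _)]
    exact LL_keyA μ d hd
  have e2 : (∫ t in Icc t₀ T, (R t (Fμ t) - R t (Fμ' t)) ∂μ')
      = ∫ s in Ioc t₀ T, d s * (μ' (Icc s T)).toReal := by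
    rw [setIntegral_congr_fun measurableSet_Icc
      (fun t ht => hDeq t ht : EqOn _ (fun t => ∫ s in Ioc t₀ t, d s) _)]
    exact LL_keyA μ' d hd
  -- integrability of the two products
  have hcdfint : ∀ (ν : Measure ℝ) (_ : IsProbabilityMeasure ν),
      IntegrableOn (fun s => d s * (ν (Icc s T)).toReal) (Ioc t₀ T) := by
    intro ν hν
    have hanti : Antitone (fun s => (ν (Icc s T)).toReal) := by
      intro x y hxy
      exact ENNReal.toReal_mono (measure_ne_top ν _)
        (measure_mono (Icc_subset_Icc_left hxy))
    have hmeas : AEStronglyMeasurable (fun s => (ν (Icc s T)).toReal)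
        ((volume : Measure ℝ).restrict (Ioc t₀ T)) :=
      hanti.measurable.aestronglyMeasurable
    have hbd : ∀ᵐ s ∂(volume : Measure ℝ).restrict (Ioc t₀ T),
        ‖(ν (Icc s T)).toReal‖ ≤ 1 := by
      refine Eventually.of_forall fun s => ?_
      rw [Real.norm_eq_abs, abs_of_nonneg ENNReal.toReal_nonneg]
      calc (ν (Icc s T)).toReal ≤ (1:ℝ≥0∞).toReal :=
            ENNReal.toReal_mono (by norm_num) prob_le_one
        _ = 1 := by simp
    exact (hd.bdd_mul hmeas hbd).congr (Eventually.of_forall fun x => mul_comm _ _)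
  have e3 : (∫ s in Ioc t₀ T, d s * (μ (Icc s T)).toReal)
        - (∫ s in Ioc t₀ T, d s * (μ' (Icc s T)).toReal)
      = ∫ s in Ioc t₀ T, d s * ((μ (Icc s T)).toReal - (μ' (Icc s T)).toReal) := by
    rw [← integral_sub (hcdfint μ inferInstance) (hcdfint μ' inferInstance)]
    congr 1
    ext s
    ring
  -- a.e. identification of the cdf difference with the primitive of f
  have hae : ∀ᵐ s ∂((volume : Measure ℝ).restrict (Ioc t₀ T)),
      d s * ((μ (Icc s T)).toReal - (μ' (Icc s T)).toReal)
        = d s * ((∫ u in Ioc t₀ T, f u) - ∫ u in Ioc t₀ s, f u) := by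
    have a1 : ∀ᵐ s ∂(volume : Measure ℝ), μ (Ici s) = μ (Ioi s) := by
      have := meas_le_ae_eq_meas_lt μ (volume : Measure ℝ) (id : ℝ → ℝ)
      filter_upwards [this] with s hs
      simpa [Ici, Ioi] using hs
    have a2 : ∀ᵐ s ∂(volume : Measure ℝ), μ' (Ici s) = μ' (Ioi s) := by
      have := meas_le_ae_eq_meas_lt μ' (volume : Measure ℝ) (id : ℝ → ℝ)
      filter_upwards [this] with s hs
      simpa [Ici, Ioi] using hs
    filter_upwards [ae_restrict_of_ae a1, ae_restrict_of_ae a2,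
      ae_restrict_mem measurableSet_Ioc] with s h1 h2 hs
    have hsmem : s ∈ Icc t₀ T := ⟨hs.1.le, hs.2⟩
    have b1 := LL_probIcc μ hs.2 h1
    have b2 := LL_probIcc μ' hs.2 h2
    have b3 : (μ (Icc s T)).toReal - (μ' (Icc s T)).toReal
        = (Fμ T - Fμ' T) - (Fμ s - Fμ' s) := by
      rw [b1, b2, hFμdef T, hFμdef s, hFμ'def T, hFμ'def s]
      ring
    rw [b3, hGeq T Tmem, hGeq s hsmem]
  -- first integration by parts
  have e4 : ∫ s in Ioc t₀ T, d s * ((∫ u in Ioc t₀ T, f u) - ∫ u in Ioc t₀ s, f u)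
      = ∫ t in Ioc t₀ T, f t * ∫ s in Ioc t₀ t, d s :=
    LL_keyB f d hf hd
  -- substitute D = G * H
  have e5 : ∫ t in Ioc t₀ T, f t * ∫ s in Ioc t₀ t, d s
      = ∫ t in Ioc t₀ T, f t * ((∫ s in Ioc t₀ t, f s) * (c₀ + ∫ s in Ioc t₀ t, gh s)) := by
    refine setIntegral_congr_fun measurableSet_Ioc fun t ht => ?_
    have htIcc : t ∈ Icc t₀ T := ⟨ht.1.le, ht.2⟩
    rw [← hDeq t htIcc, hDGH t htIcc, hGeq t htIcc, ← hHeq t htIcc]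
  -- continuity of primitives
  have hPfc : ContinuousOn (fun t => ∫ s in Ioc t₀ t, f s) (Icc t₀ T) :=
    intervalIntegral.continuousOn_primitive ((integrableOn_Icc_iff_integrableOn_Ioc (ha := enorm_ne_top)).2 hf)
  have hPghc : ContinuousOn (fun t => ∫ s in Ioc t₀ t, gh s) (Icc t₀ T) :=
    intervalIntegral.continuousOn_primitive ((integrableOn_Icc_iff_integrableOn_Ioc (ha := enorm_ne_top)).2 hghi)
  have hfPf : IntegrableOn (fun t => f t * ∫ s in Ioc t₀ t, f s) (Ioc t₀ T) :=
    LL_intmul hf hPfc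
  have hfPfPgh : IntegrableOn
      (fun t => (f t * ∫ s in Ioc t₀ t, f s) * ∫ s in Ioc t₀ t, gh s) (Ioc t₀ T) :=
    LL_intmul hfPf hPghc
  -- expand
  have e6 : ∫ t in Ioc t₀ T, f t * ((∫ s in Ioc t₀ t, f s) * (c₀ + ∫ s in Ioc t₀ t, gh s))
      = c₀ * (∫ t in Ioc t₀ T, f t * ∫ s in Ioc t₀ t, f s)
        + ∫ t in Ioc t₀ T, (f t * ∫ s in Ioc t₀ t, f s) * ∫ s in Ioc t₀ t, gh s := by
    have hrw : (fun t => f t * ((∫ s in Ioc t₀ t, f s) * (c₀ + ∫ s in Ioc t₀ t, gh s)))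
        = fun t => c₀ * (f t * ∫ s in Ioc t₀ t, f s)
            + (f t * ∫ s in Ioc t₀ t, f s) * ∫ s in Ioc t₀ t, gh s := by
      ext t; ring
    rw [hrw, integral_add (hfPf.const_mul c₀) hfPfPgh, integral_const_mul]
  -- second integration by parts
  have e7 : ∫ t in Ioc t₀ T, (f t * ∫ s in Ioc t₀ t, f s) * ∫ s in Ioc t₀ t, gh s
      = (∫ s in Ioc t₀ T, gh s) * (∫ t in Ioc t₀ T, f t * ∫ s in Ioc t₀ t, f s)
        - ∫ t in Ioc t₀ T, gh t * ∫ s in Ioc t₀ t, (f s * ∫ u in Ioc t₀ s, f u) := by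
    have hkey := LL_keyB gh (fun t => f t * ∫ s in Ioc t₀ t, f s) hghi hfPf
    have hexp : ∫ t in Ioc t₀ T,
          (f t * ∫ s in Ioc t₀ t, f s) * ((∫ s in Ioc t₀ T, gh s) - ∫ s in Ioc t₀ t, gh s)
        = (∫ s in Ioc t₀ T, gh s) * (∫ t in Ioc t₀ T, f t * ∫ s in Ioc t₀ t, f s)
          - ∫ t in Ioc t₀ T, (f t * ∫ s in Ioc t₀ t, f s) * ∫ s in Ioc t₀ t, gh s := by
      have hrw : (fun t => (f t * ∫ s in Ioc t₀ t, f s)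
              * ((∫ s in Ioc t₀ T, gh s) - ∫ s in Ioc t₀ t, gh s))
          = fun t => (∫ s in Ioc t₀ T, gh s) * (f t * ∫ s in Ioc t₀ t, f s)
              - (f t * ∫ s in Ioc t₀ t, f s) * ∫ s in Ioc t₀ t, gh s := by
        ext t; ring
      rw [hrw, integral_sub (hfPf.const_mul _) hfPfPgh, integral_const_mul]
    rw [hexp] at hkey
    linarith [hkey]
  -- the square identities
  have e8 : (∫ t in Ioc t₀ T, f t * ∫ s in Ioc t₀ t, f s)
      = (∫ s in Ioc t₀ T, f s)^2 / 2 := LL_sq f hf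
  have e10 : ∀ t ∈ Ioc t₀ T,
      (∫ s in Ioc t₀ t, (f s * ∫ u in Ioc t₀ s, f u)) = (∫ s in Ioc t₀ t, f s)^2 / 2 :=
    fun t ht => LL_sq f (hf.mono_set (Ioc_subset_Ioc_right ht.2))
  -- gh is a.e. nonnegative
  have hHmono : ∀ x ∈ Icc t₀ T, ∀ y ∈ Icc t₀ T, x ≤ y →
      h x (Fμ x) (Fμ' x) ≤ h y (Fμ y) (Fμ' y) := by
    intro x hx y hy hxy
    calc h x (Fμ x) (Fμ' x) ≤ h y (Fμ x) (Fμ' x) :=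
          hmono_t (Fμ x) (hFμr x) (Fμ' x) (hFμ'r x) hx hy hxy
      _ ≤ h y (Fμ y) (Fμ' x) :=
          hmono_x y hy (Fμ' x) (hFμ'r x) (hFμr x) (hFμr y) (hFμmono hxy)
      _ ≤ h y (Fμ y) (Fμ' y) :=
          hmono_y y hy (Fμ y) (hFμr y) (hFμ'r x) (hFμ'r y) (hFμ'mono hxy)
  have hghnn : 0 ≤ᵐ[(volume : Measure ℝ).restrict (Ioc t₀ T)] gh := by
    refine LL_density_nonneg gh hghi ?_
    intro x hx y hy hxy
    have h1 := hHeq x hx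
    have h2 := hHeq y hy
    have := hHmono x hx y hy hxy
    rw [h1, h2] at this
    linarith
  have e11 : 0 ≤ ∫ t in Ioc t₀ T, gh t * ∫ s in Ioc t₀ t, (f s * ∫ u in Ioc t₀ s, f u) := by
    refine integral_nonneg_of_ae ?_
    filter_upwards [hghnn, ae_restrict_mem measurableSet_Ioc] with t h1 h2
    rw [e10 t h2]
    exact mul_nonneg h1 (by positivity)
  -- H(T) ≤ 0
  have hHT : c₀ + (∫ s in Ioc t₀ T, gh s) ≤ 0 := by
    rw [← hHeq T Tmem]
    exact hneg T Tmem (Fμ T) (hFμr T) (Fμ' T) (hFμ'r T)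
  -- conclude
  rw [e1, e2, e3, integral_congr_ae hae, e4, e5, e6, e7, e8]
  have hsq : (0:ℝ) ≤ (∫ s in Ioc t₀ T, f s)^2 / 2 := by positivity
  nlinarith [hHT, hsq, e11]
end
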